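/- Let U, V, W be arbitrary quadratic binary forms and a_x a linear binary form over a field of characteristic zero. Then (U, (V,a_x)_1·(W,a_x)_1)_1 = (M, a_x²)_2 + (N, a_x²)_1, where M = (1/2)·(U,W)_1·V + (1/2)·(U,V)_1·W (a quartic) and N = −(1/2)·(U, V·W)_2 − (1/6)·U·(V,W)_2 (a quadratic). -/
import Mathlib


open MvPolynomial

/-- The `r`-th transvectant of binary forms `G`, `H` of degrees `m`, `n`:
`(G,H)_r = ((m−r)!(n−r)!)/(m!·n!) · Σ_{i=0}^{r} (−1)^i·C(r,i)·
  (∂^r G/∂x1^{r−i}∂x2^{i})·(∂^r H/∂x1^{i}∂x2^{r−i})`. -/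
noncomputable def transvectant {k : Type*} [Field k] (m n r : ℕ)
    (G H : MvPolynomial (Fin 2) k) : MvPolynomial (Fin 2) k :=
  C ((((m - r).factorial * (n - r).factorial : ℕ) : k) /
      ((m.factorial * n.factorial : ℕ) : k)) *
    ∑ i ∈ Finset.range (r + 1),
      C ((-1 : k) ^ i * (r.choose i : k)) *
        ((fun p => pderiv (0 : Fin 2) p)^[r - i]
            ((fun p => pderiv (1 : Fin 2) p)^[i] G) *
          (fun p => pderiv (0 : Fin 2) p)^[i]
            ((fun p => pderiv (1 : Fin 2) p)^[r - i] H))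


/-- The linear binary form `u1·x1 + u2·x2`. -/
noncomputable def linForm {k : Type*} [Field k] (u1 u2 : k) : MvPolynomial (Fin 2) k :=
  C u1 * X 0 + C u2 * X 1

section Aux
lemma fin2_weight {d : Fin 2 →₀ ℕ} : (Finsupp.weight (1 : Fin 2 → ℕ)) d = d 0 + d 1 := by
  simp [Finsupp.weight, Finsupp.linearCombination, Finsupp.sum_fintype, Fin.sum_univ_two]

lemma fin2_ext {e d : Fin 2 →₀ ℕ} : (e = d) ↔ (e 0 = d 0 ∧ e 1 = d 1) := by
  constructor
  · rintro rfl; exact ⟨rfl, rfl⟩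
  · rintro ⟨h0, h1⟩; ext i; fin_cases i <;> assumption

lemma quad_repr {k : Type*} [Field k] (P : MvPolynomial (Fin 2) k)
    (hP : P.IsHomogeneous 2) :
    P = C (coeff (Finsupp.single 0 2) P) * X 0 ^ 2 +
        C (coeff (Finsupp.single 0 1 + Finsupp.single 1 1) P) * (X 0 * X 1) +
        C (coeff (Finsupp.single 1 2) P) * X 1 ^ 2 := by
  have hx01 : (X 0 * X 1 : MvPolynomial (Fin 2) k) =
      monomial (Finsupp.single 0 1 + Finsupp.single 1 1) 1 := by
    rw [monomial_add_single]; simp [X]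
  ext d
  have hd : d 0 + d 1 = 2 ∨ coeff d P = 0 := by
    by_cases h : coeff d P = 0
    · exact Or.inr h
    · left; have := hP h; rw [fin2_weight] at this; exact this
  rw [hx01]
  simp only [coeff_add, coeff_C_mul, coeff_X_pow, coeff_monomial, mul_one, mul_ite, mul_zero]
  rcases hd with hd | hd
  · have hcases : d = Finsupp.single 0 2 ∨
        d = Finsupp.single 0 1 + Finsupp.single 1 1 ∨ d = Finsupp.single 1 2 := by
      have h0 : d 0 ≤ 2 := by omega
      interval_cases h0 : d 0
      · right; right; rw [fin2_ext]; simp [Finsupp.single_apply]; omega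
      · right; left; rw [fin2_ext]; simp [Finsupp.single_apply]; omega
      · left; rw [fin2_ext]; simp [Finsupp.single_apply]; omega
    rcases hcases with rfl | rfl | rfl <;>
      simp [fin2_ext, Finsupp.single_apply]
  · have e1 : (if (Finsupp.single (0 : Fin 2) 2 = d) then
        coeff (Finsupp.single 0 2) P else 0) = 0 := by
      split_ifs with h
      · rw [h]; exact hd
      · rfl
    have e2 : (if (Finsupp.single (0 : Fin 2) 1 + Finsupp.single 1 1 = d) then
        coeff (Finsupp.single 0 1 + Finsupp.single 1 1) P else 0) = 0 := by
      split_ifs with h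
      · rw [h]; exact hd
      · rfl
    have e3 : (if (Finsupp.single (1 : Fin 2) 2 = d) then
        coeff (Finsupp.single 1 2) P else 0) = 0 := by
      split_ifs with h
      · rw [h]; exact hd
      · rfl
    rw [e1, e2, e3, hd, add_zero, add_zero]



section TransvAux
variable {k : Type*} [Field k]


lemma pderiv_comm (i j : Fin 2) (p : MvPolynomial (Fin 2) k) :
    pderiv i (pderiv j p) = pderiv j (pderiv i p) := by
  induction p using MvPolynomial.induction_on with
  | C a => simp
  | add p q hp hq => simp [hp, hq]
  | mul_X q s hq =>
    simp only [pderiv_mul, hq]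
    rcases eq_or_ne s i with rfl | hi <;> rcases eq_or_ne s j with rfl | hj <;>
      simp [pderiv_mul, pderiv_X_self, pderiv_X_of_ne, *] <;> ring

lemma transv1 (m n : ℕ) (G H : MvPolynomial (Fin 2) k) :
    transvectant m n 1 G H =
      C ((((m - 1).factorial * (n - 1).factorial : ℕ) : k) /
        ((m.factorial * n.factorial : ℕ) : k)) *
      (pderiv 0 G * pderiv 1 H - pderiv 1 G * pderiv 0 H) := by
  simp only [transvectant, Finset.sum_range_succ, Finset.sum_range_zero,
    Function.iterate_one, Function.iterate_zero_apply, pow_zero, pow_one,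
    Nat.sub_self, Nat.sub_zero, Nat.choose_self, Nat.choose_zero_right,
    Nat.cast_one, one_mul, neg_one_mul, map_neg, map_one, zero_add]
  ring

lemma transv2 (m n : ℕ) (G H : MvPolynomial (Fin 2) k) :
    transvectant m n 2 G H =
      C ((((m - 2).factorial * (n - 2).factorial : ℕ) : k) /
        ((m.factorial * n.factorial : ℕ) : k)) *
      (pderiv 0 (pderiv 0 G) * pderiv 1 (pderiv 1 H)
        - C 2 * pderiv 0 (pderiv 1 G) * pderiv 0 (pderiv 1 H)
        + pderiv 1 (pderiv 1 G) * pderiv 0 (pderiv 0 H)) := by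
  have comm := fun p : MvPolynomial (Fin 2) k => pderiv_comm 0 1 p
  simp only [transvectant, Finset.sum_range_succ, Finset.sum_range_zero,
    Function.iterate_succ_apply', Function.iterate_zero_apply, Function.iterate_one,
    pow_zero, pow_one, Nat.sub_self, Nat.sub_zero, zero_add,
    Nat.choose_self, Nat.choose_zero_right, Nat.choose_one_right]
  congr 1
  norm_num [comm]
  ring

lemma pderiv_two (i : Fin 2) :
    pderiv i (2 : MvPolynomial (Fin 2) k) = 0 := by
  have h : (2 : MvPolynomial (Fin 2) k) = C 2 := by simp [map_ofNat]
  rw [h, pderiv_C]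

end TransvAux
end Aux

set_option maxHeartbeats 4000000

/-- For arbitrary quadratic binary forms `U, V, W` and a linear binary form `a_x` over a
field of characteristic zero, `(U, (V,a_x)_1·(W,a_x)_1)_1 = (M, a_x²)_2 + (N, a_x²)_1`,
where `M = (1/2)·(U,W)_1·V + (1/2)·(U,V)_1·W` and
`N = −(1/2)·(U,V·W)_2 − (1/6)·U·(V,W)_2`. -/
theorem pascal_stmt_11 {k : Type*} [Field k] [CharZero k]
    (U V W : MvPolynomial (Fin 2) k)
    (hU : U.IsHomogeneous 2) (hV : V.IsHomogeneous 2) (hW : W.IsHomogeneous 2)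
    (a1 a2 : k) :
    let ax := linForm a1 a2
    let M := C (1 / 2 : k) * transvectant 2 2 1 U W * V +
      C (1 / 2 : k) * transvectant 2 2 1 U V * W
    let N := -(C (1 / 2 : k) * transvectant 2 4 2 U (V * W)) -
      C (1 / 6 : k) * U * transvectant 2 2 2 V W
    transvectant 2 2 1 U (transvectant 2 1 1 V ax * transvectant 2 1 1 W ax) =
      transvectant 4 2 2 M (ax ^ 2) + transvectant 2 2 1 N (ax ^ 2) := by
  intro ax M N
  unfold ax M N
  rw [quad_repr U hU, quad_repr V hV, quad_repr W hW]
  simp only [transv1, transv2]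
  have h10 : (1 : Fin 2) ≠ 0 := by decide
  have h01 : (0 : Fin 2) ≠ 1 := by decide
  simp only [linForm, map_add, map_sub, map_neg, map_mul, pderiv_mul, pderiv_C_mul,
    pderiv_pow, pderiv_one, pderiv_C, pderiv_X_self, pderiv_X_of_ne h10,
    pderiv_X_of_ne h01, pderiv_two, mul_zero, zero_mul, add_zero, zero_add, mul_one, one_mul,
    sub_zero, zero_sub, neg_zero, Nat.cast_ofNat, Nat.cast_one]
  apply MvPolynomial.funext
  intro x
  simp only [map_add, map_sub, map_neg, map_mul, eval_C, eval_X, eval_pow, map_ofNat, map_one]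
  norm_num [Nat.factorial]
  ring
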